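/- Let n ∈ ℕ and let w ∈ Cⁿ(ℝ) be positive with w(x+y) ≤ C·w(x)·w(y) for all x,y ∈ ℝ, and suppose there are constants D_k > 0 with |w^{(k)}(s)/w(s)| ≤ D_k for all s ∈ ℝ and all k = 0,…,n. Then there exists a finite constant C_n > 0 such that |Dⁿ_{w,x,η}(f)(s)| ≤ C_n · (w(−s)/(2π|η|))ⁿ · Σ_{k=0}^n |f^{(k)}(s)| for all s, x ∈ ℝ, all η ≠ 0 and all f ∈ Cⁿ(ℝ). -/

import Mathlib

open MeasureTheory Filter Topology Set
open scoped ENNReal NNReal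

noncomputable section

/-- The operator `D_{w,x,η}`, acting on `f ∈ C¹(ℝ)` by
`D_{w,x,η}(f)(s) = (w(x)/(2πiη)) · (f / w(·+x))'(s)`. -/
def Dop (w : ℝ → ℝ) (x η : ℝ) (f : ℝ → ℂ) : ℝ → ℂ := fun s =>
  ((w x : ℂ) / (2 * Real.pi * Complex.I * η)) * deriv (fun u => f u / (w (u + x) : ℂ)) s


lemma iteratedDeriv_ofReal_comp (v : ℝ → ℝ) {n : ℕ} (hv : ContDiff ℝ n v) {k : ℕ} (hk : k ≤ n) :
    iteratedDeriv k (fun u : ℝ => (v u : ℂ)) = fun u => (Complex.ofReal (iteratedDeriv k v u)) := by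
  induction k with
  | zero => simp
  | succ k ih =>
    rw [iteratedDeriv_succ, ih (Nat.le_of_succ_le hk), iteratedDeriv_succ]
    funext u
    have hd : DifferentiableAt ℝ (iteratedDeriv k v) u :=
      (hv.differentiable_iteratedDeriv k
        (by exact_mod_cast Nat.lt_of_succ_le hk)).differentiableAt
    exact hd.hasDerivAt.ofReal_comp.deriv

lemma nat_choose_le_two_pow (i t : ℕ) : i.choose t ≤ 2 ^ i := by
  rcases le_or_gt t i with h | h
  · calc i.choose t ≤ ∑ j ∈ Finset.range (i+1), i.choose j :=
        Finset.single_le_sum (fun _ _ => Nat.zero_le _) (Finset.mem_range.mpr (Nat.lt_succ_of_le h))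
    _ = 2 ^ i := Nat.sum_range_choose i
  · simp [Nat.choose_eq_zero_of_lt h]

lemma choose_le_two_pow_real {i t n : ℕ} (hi : i ≤ n) : (i.choose t : ℝ) ≤ 2 ^ n := by
  calc (i.choose t : ℝ) ≤ (2:ℝ) ^ i := by exact_mod_cast nat_choose_le_two_pow i t
  _ ≤ 2 ^ n := pow_le_pow_right₀ one_le_two hi

lemma psi_bound (n : ℕ) (Dk : ℕ → ℝ) :
    ∀ l, l ≤ n → ∃ E : ℝ, 0 < E ∧ ∀ v : ℝ → ℝ, ContDiff ℝ n v → (∀ s, 0 < v s) →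
      (∀ k, k ≤ n → ∀ s, |iteratedDeriv k v s| ≤ Dk k * v s) →
      ∀ i, i ≤ l → ∀ s : ℝ, ‖iteratedDeriv i (fun u => (Complex.ofReal (v u))⁻¹) s‖ ≤ E / v s := by
  intro l
  induction l with
  | zero =>
    intro _
    refine ⟨1, one_pos, fun v hv hvpos hvd i hi s => ?_⟩
    interval_cases i
    simp only [iteratedDeriv_zero, norm_inv, Complex.norm_real, Real.norm_eq_abs,
      abs_of_pos (hvpos s)]
    rw [one_div]
  | succ m ih =>
    intro hmn
    obtain ⟨E', hE'pos, hE'⟩ := ih (Nat.le_of_succ_le hmn)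
    set S : ℝ := ∑ k ∈ Finset.range (n + 1), |Dk k| with hS
    have hSnonneg : 0 ≤ S := Finset.sum_nonneg fun _ _ => abs_nonneg _
    have hDle : ∀ k, k ≤ n → Dk k ≤ S := by
      intro k hk
      calc Dk k ≤ |Dk k| := le_abs_self _
      _ ≤ S := Finset.single_le_sum (f := fun k => |Dk k|) (fun _ _ => abs_nonneg _)
            (Finset.mem_range.mpr (Nat.lt_succ_of_le hk))
    set KR : ℝ := (n + 1 : ℝ) * 2 ^ n * (S * E') with hKR
    have hKRnonneg : 0 ≤ KR := by positivity
    refine ⟨E' + (n + 1 : ℝ) * 2 ^ n * (KR * E'), by positivity, ?_⟩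
    intro v hv hvpos hvd i hi s
    have hvne : ∀ u, v u ≠ 0 := fun u => (hvpos u).ne'
    set ψ : ℝ → ℂ := fun u => (Complex.ofReal (v u))⁻¹ with hψdef
    have hEmono : ∀ i, i ≤ m → ∀ s : ℝ, ‖iteratedDeriv i ψ s‖ ≤ E' / v s :=
      fun i hi s => hE' v hv hvpos hvd i hi s
    rcases Nat.lt_succ_iff_lt_or_eq.mp (Nat.lt_succ_of_le hi) with hi' | hi'
    · -- i ≤ m : use E' and enlarge
      refine (hEmono i (Nat.lt_succ_iff.mp hi') s).trans ?_
      gcongr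
      · exact (hvpos s).le
      · have : 0 ≤ (n + 1 : ℝ) * 2 ^ n * (KR * E') := by positivity
        linarith
    · -- i = m + 1
      subst hi'
      have hn1 : 1 ≤ n := le_trans (by omega) hmn
      have hVne : ∀ u : ℝ, (Complex.ofReal (v u)) ≠ 0 := by
        intro u; simpa using hvne u
      have hVcd : ContDiff ℝ n (fun u => (Complex.ofReal (v u))) :=
        Complex.ofRealCLM.contDiff.comp hv
      have hψcd : ContDiff ℝ n ψ := hVcd.inv hVne
      have hcastn1 : (((n - 1 : ℕ) : WithTop ℕ∞)) ≤ ((n : ℕ) : WithTop ℕ∞) :=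
        Nat.cast_le.mpr (Nat.sub_le n 1)
      have hvsplit : ContDiff ℝ (((n - 1 : ℕ) : WithTop ℕ∞) + 1) v := by
        have : (((n - 1 : ℕ) : WithTop ℕ∞) + 1) = ((n : ℕ) : WithTop ℕ∞) := by
          rw [show ((n : ℕ) : WithTop ℕ∞) = (((n - 1) + 1 : ℕ) : WithTop ℕ∞) by
            rw [Nat.sub_add_cancel hn1]]
          push_cast
          rfl
        rwa [this]
      have hdv : ContDiff ℝ ((n - 1 : ℕ)) (deriv v) :=
        (contDiff_succ_iff_deriv.mp hvsplit).2.2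
      set R : ℝ → ℂ := fun u => Complex.ofReal (deriv v u) * ψ u with hRdef
      have hRcd : ContDiff ℝ ((n - 1 : ℕ)) R :=
        (Complex.ofRealCLM.contDiff.comp hdv).mul (hψcd.of_le hcastn1)
      have hψderiv : deriv ψ = fun u => -(R u * ψ u) := by
        funext u
        have hdva : DifferentiableAt ℝ v u :=
          (hv.differentiable (by exact_mod_cast (show n ≠ 0 by omega))).differentiableAt
        have hV : HasDerivAt (fun u => (Complex.ofReal (v u))) ((deriv v u : ℝ) : ℂ) u :=
          hdva.hasDerivAt.ofReal_comp
        have hid := ((hasDerivAt_inv (hVne u)).comp u hV).deriv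
        simp only [Function.comp_def] at hid
        simp only [hψdef, hRdef]
        rw [hid]
        rw [pow_two, mul_inv]
        ring
      -- bounds on derivatives of R
      have hRb : ∀ i, i ≤ m → ∀ u : ℝ, ‖iteratedDeriv i R u‖ ≤ KR := by
        intro i him u
        have hile : (i : WithTop ℕ∞) ≤ ((n - 1 : ℕ) : WithTop ℕ∞) :=
          Nat.cast_le.mpr (by omega)
        have hmul := norm_iteratedFDeriv_mul_le (𝕜 := ℝ)
          (Complex.ofRealCLM.contDiff.comp hdv) (hψcd.of_le hcastn1) u hile
        simp only [norm_iteratedFDeriv_eq_norm_iteratedDeriv] at hmul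
        refine hmul.trans ?_
        have hterm : ∀ t ∈ Finset.range (i + 1),
            (i.choose t : ℝ) * ‖iteratedDeriv t (fun u => Complex.ofReal (deriv v u)) u‖ *
              ‖iteratedDeriv (i - t) ψ u‖ ≤ 2 ^ n * (S * v u) * (E' / v u) := by
          intro t ht
          have htm : t ≤ i := Nat.lt_succ_iff.mp (Finset.mem_range.mp ht)
          have hA : ‖iteratedDeriv t (fun u => Complex.ofReal (deriv v u)) u‖ ≤ S * v u := by
            rw [iteratedDeriv_ofReal_comp (deriv v) hdv (by omega : t ≤ n - 1)]
            rw [Complex.norm_real, Real.norm_eq_abs, ← iteratedDeriv_succ']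
            exact (hvd (t + 1) (by omega) u).trans
              (mul_le_mul_of_nonneg_right (hDle (t + 1) (by omega)) (hvpos u).le)
          have hB : ‖iteratedDeriv (i - t) ψ u‖ ≤ E' / v u :=
            hEmono (i - t) (le_trans (Nat.sub_le i t) him) u
          have hC : (i.choose t : ℝ) ≤ 2 ^ n := choose_le_two_pow_real (by omega)
          have h1 : (0:ℝ) ≤ 2 ^ n * (S * v u) :=
            mul_nonneg (by positivity) (mul_nonneg hSnonneg (hvpos u).le)
          exact mul_le_mul (mul_le_mul hC hA (norm_nonneg _) (by positivity)) hB
            (norm_nonneg _) h1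
        calc ∑ t ∈ Finset.range (i + 1), (i.choose t : ℝ) *
              ‖iteratedDeriv t (fun u => Complex.ofReal (deriv v u)) u‖ *
              ‖iteratedDeriv (i - t) ψ u‖
            ≤ ∑ _t ∈ Finset.range (i + 1), 2 ^ n * (S * v u) * (E' / v u) :=
              Finset.sum_le_sum hterm
          _ = (i + 1 : ℝ) * (2 ^ n * (S * v u) * (E' / v u)) := by
              rw [Finset.sum_const, Finset.card_range, nsmul_eq_mul]; push_cast; ring
          _ ≤ (n + 1 : ℝ) * (2 ^ n * (S * v u) * (E' / v u)) := by
              have h0 : (0:ℝ) ≤ 2 ^ n * (S * v u) * (E' / v u) :=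
                mul_nonneg (mul_nonneg (by positivity)
                  (mul_nonneg hSnonneg (hvpos u).le))
                  (div_nonneg hE'pos.le (hvpos u).le)
              have : (i + 1 : ℝ) ≤ (n + 1 : ℝ) := by
                have : i ≤ n := by omega
                exact_mod_cast Nat.succ_le_succ this
              exact mul_le_mul_of_nonneg_right this h0
          _ = KR := by
              rw [hKR]
              field_simp [hvne u]
      -- main computation
      rw [iteratedDeriv_succ', hψderiv, iteratedDeriv_fun_neg, norm_neg]
      have hmle : ((m : ℕ) : WithTop ℕ∞) ≤ ((n - 1 : ℕ) : WithTop ℕ∞) :=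
        Nat.cast_le.mpr (by omega)
      have houter := norm_iteratedFDeriv_mul_le (𝕜 := ℝ) hRcd (hψcd.of_le hcastn1) s hmle
      simp only [norm_iteratedFDeriv_eq_norm_iteratedDeriv] at houter
      refine houter.trans ?_
      have hterm : ∀ t ∈ Finset.range (m + 1),
          (m.choose t : ℝ) * ‖iteratedDeriv t R s‖ * ‖iteratedDeriv (m - t) ψ s‖ ≤
            2 ^ n * KR * (E' / v s) := by
        intro t ht
        have htm : t ≤ m := Nat.lt_succ_iff.mp (Finset.mem_range.mp ht)
        have hA := hRb t htm s
        have hB : ‖iteratedDeriv (m - t) ψ s‖ ≤ E' / v s :=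
          hEmono (m - t) (Nat.sub_le m t) s
        have hC : (m.choose t : ℝ) ≤ 2 ^ n := choose_le_two_pow_real (by omega)
        have h1 : (0:ℝ) ≤ 2 ^ n * KR := mul_nonneg (by positivity) hKRnonneg
        exact mul_le_mul (mul_le_mul hC hA (norm_nonneg _) (by positivity)) hB
          (norm_nonneg _) h1
      calc ∑ t ∈ Finset.range (m + 1), (m.choose t : ℝ) * ‖iteratedDeriv t R s‖ *
            ‖iteratedDeriv (m - t) ψ s‖
          ≤ ∑ _t ∈ Finset.range (m + 1), 2 ^ n * KR * (E' / v s) :=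
            Finset.sum_le_sum hterm
        _ = (m + 1 : ℝ) * (2 ^ n * KR * (E' / v s)) := by
            rw [Finset.sum_const, Finset.card_range, nsmul_eq_mul]; push_cast; ring
        _ ≤ (n + 1 : ℝ) * (2 ^ n * KR * (E' / v s)) := by
            have h0 : (0:ℝ) ≤ 2 ^ n * KR * (E' / v s) :=
              mul_nonneg (mul_nonneg (by positivity) hKRnonneg)
                (div_nonneg hE'pos.le (hvpos s).le)
            have : (m + 1 : ℝ) ≤ (n + 1 : ℝ) := by
              have : m ≤ n := by omega
              exact_mod_cast Nat.succ_le_succ this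
            exact mul_le_mul_of_nonneg_right this h0
        _ = ((n + 1 : ℝ) * 2 ^ n * (KR * E')) / v s := by
            field_simp [hvne s]
        _ ≤ (E' + (n + 1 : ℝ) * 2 ^ n * (KR * E')) / v s := by
            gcongr
            · exact (hvpos s).le
            · linarith

lemma T_iter_contDiff (n : ℕ) (v : ℝ → ℝ) (hv : ContDiff ℝ n v) (hvne : ∀ s, v s ≠ 0)
    (f : ℝ → ℂ) (hf : ContDiff ℝ n f) :
    ∀ m, m ≤ n → ContDiff ℝ ((n - m : ℕ))
      ((fun g : ℝ → ℂ => deriv (fun u => g u * (Complex.ofReal (v u))⁻¹))^[m] f) := by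
  have hψcd : ContDiff ℝ n (fun u => (Complex.ofReal (v u))⁻¹) :=
    (Complex.ofRealCLM.contDiff.comp hv).inv (fun u => by simpa using hvne u)
  intro m
  induction m with
  | zero => intro _; simpa using hf
  | succ m ih =>
    intro hm
    have hg := ih (Nat.le_of_succ_le hm)
    rw [Function.iterate_succ_apply']
    have hprod : ContDiff ℝ ((n - m : ℕ))
        (fun u => ((fun g : ℝ → ℂ => deriv (fun u => g u * (Complex.ofReal (v u))⁻¹))^[m] f) u *
          (Complex.ofReal (v u))⁻¹) :=
      hg.mul (hψcd.of_le (Nat.cast_le.mpr (Nat.sub_le n m)))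
    have hcast : (((n - (m + 1) : ℕ) : WithTop ℕ∞) + 1) = ((n - m : ℕ) : WithTop ℕ∞) := by
      rw [show ((n - m : ℕ) : WithTop ℕ∞) = (((n - (m + 1)) + 1 : ℕ) : WithTop ℕ∞) by
        rw [show (n - (m + 1)) + 1 = n - m from by omega]]
      push_cast
      rfl
    have hsplit : ContDiff ℝ (((n - (m + 1) : ℕ) : WithTop ℕ∞) + 1)
        (fun u => ((fun g : ℝ → ℂ => deriv (fun u => g u * (Complex.ofReal (v u))⁻¹))^[m] f) u *
          (Complex.ofReal (v u))⁻¹) := by rwa [hcast]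
    exact (contDiff_succ_iff_deriv.mp hsplit).2.2

lemma T_iter_bound (n : ℕ) (Dk : ℕ → ℝ) :
    ∃ B : ℝ, 0 < B ∧ ∀ v : ℝ → ℝ, ContDiff ℝ n v → (∀ s, 0 < v s) →
      (∀ k, k ≤ n → ∀ s, |iteratedDeriv k v s| ≤ Dk k * v s) →
      ∀ f : ℝ → ℂ, ContDiff ℝ n f → ∀ m j, m + j ≤ n → ∀ s : ℝ,
        ‖iteratedDeriv j
            ((fun g : ℝ → ℂ => deriv (fun u => g u * (Complex.ofReal (v u))⁻¹))^[m] f) s‖ ≤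
          B ^ m * ((v s)⁻¹) ^ m * ∑ k ∈ Finset.range (m + j + 1), ‖iteratedDeriv k f s‖ := by
  obtain ⟨E, hEpos, hE⟩ := psi_bound n Dk n le_rfl
  refine ⟨(n + 1 : ℝ) * 2 ^ n * E + 1, by positivity, ?_⟩
  set B : ℝ := (n + 1 : ℝ) * 2 ^ n * E + 1 with hBdef
  have hBpos : 0 < B := by positivity
  have hBge : (n + 1 : ℝ) * 2 ^ n * E ≤ B := by simp [hBdef]
  intro v hv hvpos hvd f hf m
  have hvne : ∀ u, v u ≠ 0 := fun u => (hvpos u).ne'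
  have hψcd : ContDiff ℝ n (fun u => (Complex.ofReal (v u))⁻¹) :=
    (Complex.ofRealCLM.contDiff.comp hv).inv (fun u => by simpa using hvne u)
  induction m with
  | zero =>
    intro j hj s
    simp only [Function.iterate_zero_apply, pow_zero, one_mul, Nat.zero_add]
    exact Finset.single_le_sum (f := fun k => ‖iteratedDeriv k f s‖)
      (fun _ _ => norm_nonneg _) (Finset.mem_range.mpr (by omega))
  | succ m ih =>
    intro j hj s
    have hg := T_iter_contDiff n v hv hvne f hf m (by omega)
    rw [Function.iterate_succ_apply', ← iteratedDeriv_succ']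
    have hle : ((j + 1 : ℕ) : WithTop ℕ∞) ≤ ((n - m : ℕ) : WithTop ℕ∞) :=
      Nat.cast_le.mpr (by omega)
    have hmul := norm_iteratedFDeriv_mul_le (𝕜 := ℝ) hg
      ((hψcd.of_le (Nat.cast_le.mpr (Nat.sub_le n m)))) s hle
    simp only [norm_iteratedFDeriv_eq_norm_iteratedDeriv] at hmul
    refine hmul.trans ?_
    set Q : ℝ := ∑ k ∈ Finset.range (m + j + 2), ‖iteratedDeriv k f s‖ with hQdef
    have hQ0 : 0 ≤ Q := Finset.sum_nonneg fun _ _ => norm_nonneg _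
    have hpow0 : (0:ℝ) ≤ B ^ m * ((v s)⁻¹) ^ m :=
      mul_nonneg (pow_nonneg hBpos.le m) (pow_nonneg (inv_nonneg.mpr (hvpos s).le) m)
    have hterm : ∀ i ∈ Finset.range (j + 2),
        ((j + 1).choose i : ℝ) *
          ‖iteratedDeriv i
            ((fun g : ℝ → ℂ => deriv (fun u => g u * (Complex.ofReal (v u))⁻¹))^[m] f) s‖ *
          ‖iteratedDeriv (j + 1 - i) (fun u => (Complex.ofReal (v u))⁻¹) s‖ ≤
          2 ^ n * (B ^ m * ((v s)⁻¹) ^ m * Q) * (E * (v s)⁻¹) := by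
      intro i hi
      have hij : i ≤ j + 1 := Nat.lt_succ_iff.mp (Finset.mem_range.mp hi)
      have hA := ih i (by omega) s
      have hA' : ‖iteratedDeriv i
          ((fun g : ℝ → ℂ => deriv (fun u => g u * (Complex.ofReal (v u))⁻¹))^[m] f) s‖ ≤
          B ^ m * ((v s)⁻¹) ^ m * Q := by
        refine hA.trans ?_
        refine mul_le_mul_of_nonneg_left ?_ hpow0
        refine Finset.sum_le_sum_of_subset_of_nonneg ?_ (fun _ _ _ => norm_nonneg _)
        exact Finset.range_subset_range.mpr (by omega)
      have hB' : ‖iteratedDeriv (j + 1 - i) (fun u => (Complex.ofReal (v u))⁻¹) s‖ ≤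
          E * (v s)⁻¹ := by
        rw [← div_eq_mul_inv]
        exact hE v hv hvpos hvd (j + 1 - i) (by omega) s
      have hC : ((j + 1).choose i : ℝ) ≤ 2 ^ n := choose_le_two_pow_real (by omega)
      have h1 : (0:ℝ) ≤ 2 ^ n * (B ^ m * ((v s)⁻¹) ^ m * Q) :=
        mul_nonneg (by positivity) (mul_nonneg hpow0 hQ0)
      exact mul_le_mul (mul_le_mul hC hA' (norm_nonneg _) (by positivity)) hB'
        (norm_nonneg _) h1
    calc ∑ i ∈ Finset.range (j + 1 + 1), ((j + 1).choose i : ℝ) *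
          ‖iteratedDeriv i
            ((fun g : ℝ → ℂ => deriv (fun u => g u * (Complex.ofReal (v u))⁻¹))^[m] f) s‖ *
          ‖iteratedDeriv (j + 1 - i) (fun u => (Complex.ofReal (v u))⁻¹) s‖
        ≤ ∑ _i ∈ Finset.range (j + 2), 2 ^ n * (B ^ m * ((v s)⁻¹) ^ m * Q) * (E * (v s)⁻¹) :=
          Finset.sum_le_sum hterm
      _ = (j + 2 : ℝ) * (2 ^ n * (B ^ m * ((v s)⁻¹) ^ m * Q) * (E * (v s)⁻¹)) := by
          rw [Finset.sum_const, Finset.card_range, nsmul_eq_mul]; push_cast; ring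
      _ ≤ (n + 1 : ℝ) * (2 ^ n * (B ^ m * ((v s)⁻¹) ^ m * Q) * (E * (v s)⁻¹)) := by
          have h0 : (0:ℝ) ≤ 2 ^ n * (B ^ m * ((v s)⁻¹) ^ m * Q) * (E * (v s)⁻¹) :=
            mul_nonneg (mul_nonneg (by positivity) (mul_nonneg hpow0 hQ0))
              (mul_nonneg hEpos.le (inv_nonneg.mpr (hvpos s).le))
          have h2 : (j + 2 : ℝ) ≤ (n + 1 : ℝ) := by
            have : j + 2 ≤ n + 1 := by omega
            exact_mod_cast this
          exact mul_le_mul_of_nonneg_right h2 h0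
      _ = ((n + 1 : ℝ) * 2 ^ n * E) * (B ^ m * ((v s)⁻¹) ^ (m + 1) * Q) := by ring
      _ ≤ B * (B ^ m * ((v s)⁻¹) ^ (m + 1) * Q) := by
          refine mul_le_mul_of_nonneg_right hBge ?_
          exact mul_nonneg (mul_nonneg (pow_nonneg hBpos.le m)
            (pow_nonneg (inv_nonneg.mpr (hvpos s).le) _)) hQ0
      _ = B ^ (m + 1) * ((v s)⁻¹) ^ (m + 1) * Q := by ring
      _ = B ^ (m + 1) * ((v s)⁻¹) ^ (m + 1) *
            ∑ k ∈ Finset.range (m + 1 + j + 1), ‖iteratedDeriv k f s‖ := by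
          rw [hQdef, show m + j + 2 = m + 1 + j + 1 from by omega]

lemma Dop_iterate_eq (w : ℝ → ℝ) (x η : ℝ) (f : ℝ → ℂ) (m : ℕ) :
    (Dop w x η)^[m] f = fun s => ((w x : ℂ) / (2 * Real.pi * Complex.I * η)) ^ m *
      ((fun g : ℝ → ℂ => deriv (fun u => g u * (Complex.ofReal (w (u + x)))⁻¹))^[m] f) s := by
  induction m with
  | zero => simp
  | succ m ih =>
    rw [Function.iterate_succ_apply', ih, Function.iterate_succ_apply']
    funext s
    simp only [Dop]
    have hrw : (fun u => (((w x : ℂ) / (2 * Real.pi * Complex.I * η)) ^ m *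
          ((fun g : ℝ → ℂ => deriv (fun u => g u * (Complex.ofReal (w (u + x)))⁻¹))^[m] f) u) /
            (w (u + x) : ℂ)) =
        (fun u => ((w x : ℂ) / (2 * Real.pi * Complex.I * η)) ^ m *
          (((fun g : ℝ → ℂ => deriv (fun u => g u * (Complex.ofReal (w (u + x)))⁻¹))^[m] f) u *
            (Complex.ofReal (w (u + x)))⁻¹)) := by
      funext u
      rw [div_eq_mul_inv]
      ring
    rw [hrw, deriv_const_mul_field]
    ring

/-- Let `n ∈ ℕ` and `w ∈ Cⁿ(ℝ)` be positive with `w(x+y) ≤ C w(x) w(y)` and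
`|w^{(k)}(s)/w(s)| ≤ D_k` for all `s` and `k = 0,…,n`.  Then there is a finite constant
`C_n > 0` such that `|Dⁿ_{w,x,η}(f)(s)| ≤ C_n (w(−s)/(2π|η|))ⁿ Σ_{k=0}^n |f^{(k)}(s)|`
for all `s, x ∈ ℝ`, `η ≠ 0` and `f ∈ Cⁿ(ℝ)`. -/
theorem Dop_iterate_estimate (n : ℕ) (w : ℝ → ℝ)
    (hw : ContDiff ℝ n w) (hwpos : ∀ s : ℝ, 0 < w s)
    (C : ℝ) (hwsub : ∀ x y : ℝ, w (x + y) ≤ C * w x * w y)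
    (Dk : ℕ → ℝ) (hDkpos : ∀ k ≤ n, 0 < Dk k)
    (hder : ∀ k ≤ n, ∀ s : ℝ, |iteratedDeriv k w s / w s| ≤ Dk k) :
    ∃ Cn : ℝ, 0 < Cn ∧
      ∀ f : ℝ → ℂ, ContDiff ℝ n f → ∀ s x η : ℝ, η ≠ 0 →
        ‖(Dop w x η)^[n] f s‖ ≤
          Cn * (w (-s) / (2 * Real.pi * |η|)) ^ n *
            ∑ k ∈ Finset.range (n + 1), ‖iteratedDeriv k f s‖ := by
  obtain ⟨B, hBpos, hB⟩ := T_iter_bound n Dk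
  have hC0 : 0 < C := by
    have h := hwsub 0 0
    rw [add_zero] at h
    have h0 := hwpos 0
    nlinarith [mul_pos h0 h0]
  refine ⟨B ^ n * C ^ n, by positivity, ?_⟩
  intro f hf s x η hη
  set P : ℝ := 2 * Real.pi * |η| with hPdef
  have hP : 0 < P := by
    have := abs_pos.mpr hη
    have := Real.pi_pos
    positivity
  -- translated weight
  have hv : ContDiff ℝ n (fun u => w (u + x)) := hw.comp (contDiff_id.add contDiff_const)
  have hvpos : ∀ u : ℝ, 0 < (fun u => w (u + x)) u := fun u => hwpos (u + x)
  have hvd : ∀ k, k ≤ n → ∀ u : ℝ,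
      |iteratedDeriv k (fun u => w (u + x)) u| ≤ Dk k * (fun u => w (u + x)) u := by
    intro k hk u
    have h1 : iteratedDeriv k (fun u => w (u + x)) u = iteratedDeriv k w (u + x) :=
      congrFun (iteratedDeriv_comp_add_const k w x) u
    have h2 := hder k hk (u + x)
    rw [abs_div, abs_of_pos (hwpos (u + x)), div_le_iff₀ (hwpos (u + x))] at h2
    simpa [h1] using h2
  -- norm of the scalar
  have hnorma : ‖((w x : ℂ) / (2 * Real.pi * Complex.I * η))‖ = w x / P := by
    rw [norm_div]
    congr 1
    · simp [Complex.norm_real, abs_of_pos (hwpos x)]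
    · rw [hPdef]
      simp only [norm_mul, Complex.norm_I, Complex.norm_real, Real.norm_eq_abs, mul_one]
      rw [abs_of_pos Real.pi_pos]
      norm_num
  rw [Dop_iterate_eq w x η f n]
  have hb := hB (fun u => w (u + x)) hv hvpos hvd f hf n 0 (by omega) s
  simp only [iteratedDeriv_zero, Nat.add_zero] at hb
  rw [norm_mul, norm_pow, hnorma]
  have hwxP : (0:ℝ) ≤ w x / P := div_nonneg (hwpos x).le hP.le
  have hsum0 : (0:ℝ) ≤ ∑ k ∈ Finset.range (n + 1), ‖iteratedDeriv k f s‖ :=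
    Finset.sum_nonneg fun _ _ => norm_nonneg _
  have key : w x / P * (w (s + x))⁻¹ ≤ C * w (-s) / P := by
    have h1 : w x ≤ C * w (-s) * w (s + x) := by
      have h := hwsub (-s) (s + x)
      rwa [show -s + (s + x) = x by ring] at h
    have h2 : w x / w (s + x) ≤ C * w (-s) := (div_le_iff₀ (hwpos (s + x))).mpr h1
    calc w x / P * (w (s + x))⁻¹ = (w x / w (s + x)) / P := by ring
      _ ≤ (C * w (-s)) / P := by
          gcongr
      _ = C * w (-s) / P := rfl
  calc (w x / P) ^ n *
        ‖((fun g : ℝ → ℂ => deriv (fun u => g u * (Complex.ofReal (w (u + x)))⁻¹))^[n] f) s‖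
      ≤ (w x / P) ^ n * (B ^ n * ((w (s + x))⁻¹) ^ n *
          ∑ k ∈ Finset.range (n + 1), ‖iteratedDeriv k f s‖) :=
        mul_le_mul_of_nonneg_left hb (pow_nonneg hwxP n)
    _ = B ^ n * (w x / P * (w (s + x))⁻¹) ^ n *
          ∑ k ∈ Finset.range (n + 1), ‖iteratedDeriv k f s‖ := by
        rw [mul_pow]
        ring
    _ ≤ B ^ n * (C * w (-s) / P) ^ n *
          ∑ k ∈ Finset.range (n + 1), ‖iteratedDeriv k f s‖ := by
        refine mul_le_mul_of_nonneg_right (mul_le_mul_of_nonneg_left ?_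
          (pow_nonneg hBpos.le n)) hsum0
        exact pow_le_pow_left₀ (mul_nonneg hwxP (inv_nonneg.mpr (hwpos (s + x)).le)) key n
    _ = B ^ n * C ^ n * (w (-s) / P) ^ n *
          ∑ k ∈ Finset.range (n + 1), ‖iteratedDeriv k f s‖ := by
        rw [mul_div_assoc, mul_pow]
        ring
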